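/- Let S_i(x) = A_i x + t_i, i ∈ I, be an affine IFS on ℝ^d with all A_i invertible and ‖A_i‖ < 1, with attractor X and λ(A) = ∑_{i∈I} |Det(A_i)|. Let h: ℕ → [0,∞) satisfy ∑_{n=1}^∞ h(n) < ∞. Then for any sequence (x_n) in X, the set of x ∈ X such that (T_{i_N} ∘ ⋯ ∘ T_{i_1})(x) ∈ B(x_N, (h(N)/λ(A)^N)^{1/d}) for infinitely many finite words (i_1,…,i_N) has Lebesgue measure zero. -/

import Mathlib

open MeasureTheory

/-- The absolute value of the determinant of (the linear part of) a continuous linear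
equivalence of `ℝ^d`. -/
noncomputable def cleDet {d : ℕ}
    (B : EuclideanSpace ℝ (Fin d) ≃L[ℝ] EuclideanSpace ℝ (Fin d)) : ℝ :=
  LinearMap.det
    (ContinuousLinearMap.toLinearMap
      (B : EuclideanSpace ℝ (Fin d) →L[ℝ] EuclideanSpace ℝ (Fin d)))

/-- If `∑ h(n) < ∞` then the shrinking target set `W(S, (x_n), h)` is Lebesgue null. -/
theorem stmt_10 {d : ℕ} (hd : 0 < d) {ι : Type*} [Fintype ι]
    (A : ι → (EuclideanSpace ℝ (Fin d) ≃L[ℝ] EuclideanSpace ℝ (Fin d)))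
    (hA : ∀ i, ‖(A i : EuclideanSpace ℝ (Fin d) →L[ℝ] EuclideanSpace ℝ (Fin d))‖ < 1)
    (t : ι → EuclideanSpace ℝ (Fin d))
    (X : Set (EuclideanSpace ℝ (Fin d))) (hXc : IsCompact X) (hXne : X.Nonempty)
    (hX : X = ⋃ i, (fun x => A i x + t i) '' X)
    (h : ℕ → ℝ) (hh0 : ∀ n, 0 ≤ h n) (hh : Summable h)
    (xs : ℕ → EuclideanSpace ℝ (Fin d)) (hxs : ∀ n, xs n ∈ X) :
    volume {x ∈ X |
      {w : List ι | w ≠ [] ∧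
        w.foldl (fun y i => (A i).symm (y - t i)) x ∈
          Metric.closedBall (xs w.length)
            ((h w.length / (∑ i, |cleDet (A i)|) ^ w.length) ^ ((1 : ℝ) / d))}.Infinite}
      = 0 := by
  classical
  rcases isEmpty_or_nonempty ι with hempty | hne
  · have hempty' : ∀ x : EuclideanSpace ℝ (Fin d),
        ¬ {w : List ι | w ≠ [] ∧
          w.foldl (fun y i => (A i).symm (y - t i)) x ∈
            Metric.closedBall (xs w.length)
              ((h w.length / (∑ i, |cleDet (A i)|) ^ w.length) ^ ((1 : ℝ) / d))}.Infinite := by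
      intro x hinf
      refine hinf (Set.Finite.subset Set.finite_empty ?_)
      rintro w ⟨hwne, -⟩
      cases w with
      | nil => exact absurd rfl hwne
      | cons i _ => exact isEmptyElim i
    have : {x ∈ X |
        {w : List ι | w ≠ [] ∧
          w.foldl (fun y i => (A i).symm (y - t i)) x ∈
            Metric.closedBall (xs w.length)
              ((h w.length / (∑ i, |cleDet (A i)|) ^ w.length) ^ ((1 : ℝ) / d))}.Infinite} = ∅ :=
      Set.eq_empty_iff_forall_notMem.mpr fun x hx => hempty' x hx.2
    rw [this]; exact measure_empty
  -- Nonempty case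
  set f : (EuclideanSpace ℝ (Fin d)) → ι → (EuclideanSpace ℝ (Fin d)) := fun y i => (A i).symm (y - t i) with hf
  set δ : ι → ENNReal := fun i => ENNReal.ofReal |cleDet (A i)| with hδ
  set L : ℝ := ∑ i, |cleDet (A i)| with hLdef
  have hdet : ∀ i, cleDet (A i) ≠ 0 := fun i =>
    ((A i).toLinearEquiv.isUnit_det').ne_zero
  have hLpos : 0 < L := Finset.sum_pos (fun i _ => abs_pos.mpr (hdet i)) Finset.univ_nonempty
  have hd0 : (d : ℝ) ≠ 0 := Nat.cast_ne_zero.mpr hd.ne'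
  set r : ℕ → ℝ := fun N => (h N / L ^ N) ^ ((1 : ℝ) / d) with hrdef
  have hbase : ∀ N, 0 ≤ h N / L ^ N := fun N => div_nonneg (hh0 N) (pow_nonneg hLpos.le N)
  have hrnonneg : ∀ N, 0 ≤ r N := fun N => Real.rpow_nonneg (hbase N) _
  have hrd : ∀ N, r N ^ d = h N / L ^ N := by
    intro N
    rw [hrdef]
    rw [← Real.rpow_natCast ((h N / L ^ N) ^ ((1 : ℝ) / d)) d, ← Real.rpow_mul (hbase N),
      one_div, inv_mul_cancel₀ hd0, Real.rpow_one]
  set B : ℕ → Set (EuclideanSpace ℝ (Fin d)) := fun N => Metric.closedBall (xs N) (r N) with hB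
  set ES : ℕ → Set (EuclideanSpace ℝ (Fin d)) := fun N =>
    ⋃ v : Fin N → ι, (fun x => (List.ofFn v).foldl f x) ⁻¹' B N with hES
  -- preimage measure under one step
  have Tkey : ∀ (i : ι) (u : Set (EuclideanSpace ℝ (Fin d))),
      volume ((fun x => (A i).symm (x - t i)) ⁻¹' u) = δ i * volume u := by
    intro i u
    have h1 : (fun x : (EuclideanSpace ℝ (Fin d)) => (A i).symm (x - t i)) ⁻¹' u
        = (fun x : (EuclideanSpace ℝ (Fin d)) => x + (-t i)) ⁻¹' (⇑(A i).symm ⁻¹' u) := by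
      ext x; simp [sub_eq_add_neg]
    have h2 : ⇑(A i).symm ⁻¹' u = ⇑(A i) '' u := ((A i).image_eq_preimage_symm u).symm
    rw [h1, measure_preimage_add_right, h2,
      Measure.addHaar_image_continuousLinearEquiv]
    rfl
  have fold : ∀ (w : List ι) (u : Set (EuclideanSpace ℝ (Fin d))),
      volume ((fun x => w.foldl f x) ⁻¹' u) = (w.map δ).prod * volume u := by
    intro w
    induction w with
    | nil => intro u; simp
    | cons i w ih =>
      intro u
      have hpre : (fun x => (i :: w).foldl f x) ⁻¹' u
          = (fun x => (A i).symm (x - t i)) ⁻¹' ((fun y => w.foldl f y) ⁻¹' u) := rfl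
      rw [hpre, Tkey, ih]
      simp [mul_assoc]
  -- measure of ES N
  have hESle : ∀ N, volume (ES N)
      ≤ ENNReal.ofReal (h N) * volume (Metric.ball (0 : (EuclideanSpace ℝ (Fin d))) 1) := by
    intro N
    have step1 : volume (ES N)
        ≤ ∑ v : Fin N → ι, volume ((fun x => (List.ofFn v).foldl f x) ⁻¹' B N) :=
      measure_iUnion_fintype_le _ _
    have step2 : ∑ v : Fin N → ι, volume ((fun x => (List.ofFn v).foldl f x) ⁻¹' B N)
        = (∑ i, δ i) ^ N * volume (B N) := by
      rw [Fintype.sum_pow, Finset.sum_mul]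
      refine Finset.sum_congr rfl fun v _ => ?_
      rw [fold, List.map_ofFn, List.prod_ofFn]
      rfl
    have step3 : (∑ i, δ i) ^ N * volume (B N)
        = ENNReal.ofReal (h N) * volume (Metric.ball (0 : (EuclideanSpace ℝ (Fin d))) 1) := by
      have hsum : (∑ i, δ i) = ENNReal.ofReal L := by
        rw [hLdef, ENNReal.ofReal_sum_of_nonneg fun i _ => abs_nonneg _]
      have hvolB : volume (B N)
          = ENNReal.ofReal (r N ^ d) * volume (Metric.ball (0 : (EuclideanSpace ℝ (Fin d))) 1) := by
        rw [hB]
        rw [Measure.addHaar_closedBall volume (xs N) (hrnonneg N),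
          finrank_euclideanSpace_fin]
      rw [hvolB, hsum, ← ENNReal.ofReal_pow hLpos.le, ← mul_assoc,
        ← ENNReal.ofReal_mul (pow_nonneg hLpos.le N), hrd N, mul_comm (L ^ N),
        div_mul_cancel₀ _ (pow_ne_zero N hLpos.ne')]
    calc volume (ES N) ≤ _ := step1
      _ = _ := step2
      _ = _ := step3
  have hsum_ne : (∑' N, volume (ES N)) ≠ ⊤ := by
    refine ne_top_of_le_ne_top ?_ (ENNReal.tsum_le_tsum hESle)
    rw [ENNReal.tsum_mul_right, ← ENNReal.ofReal_tsum_of_nonneg hh0 hh]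
    exact ENNReal.mul_ne_top ENNReal.ofReal_ne_top measure_ball_lt_top.ne
  have hlim : volume (Filter.limsup ES Filter.atTop) = 0 :=
    measure_limsup_atTop_eq_zero hsum_ne
  refine measure_mono_null ?_ hlim
  rintro x ⟨-, hx⟩
  rw [Filter.mem_limsup_iff_frequently_mem, Filter.frequently_atTop]
  intro n
  set Wset : Set (List ι) := {w : List ι | w ≠ [] ∧
      w.foldl (fun y i => (A i).symm (y - t i)) x ∈ Metric.closedBall (xs w.length)
        ((h w.length / L ^ w.length) ^ ((1 : ℝ) / d))} with hW
  have hmem : ∀ w ∈ Wset, x ∈ ES w.length := by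
    intro w hw
    exact Set.mem_iUnion.mpr ⟨w.get, by
      show (List.ofFn w.get).foldl f x ∈ B w.length
      rw [List.ofFn_get]
      exact hw.2⟩
  have himg : (List.length '' Wset).Infinite := by
    intro hfin
    refine hx (Set.Finite.subset (hfin.biUnion fun N _ => List.finite_length_eq ι N) ?_)
    intro w hw
    exact Set.mem_biUnion (Set.mem_image_of_mem _ hw) rfl
  obtain ⟨N, ⟨w, hw, hwlen⟩, hn⟩ := himg.exists_gt n
  exact ⟨N, hn.le, hwlen ▸ hmem w hw⟩
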